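/- Let C be a (k,r,h) data-local maximally recoverable code with exactly two local groups (so k = 2r), with local group supports S_1, S_2. Then: (i) for every U ⊆ {1,...,n} with |U| = u ≤ r, ρ(U) = u; (ii) for every U with r+1 ≤ |U| = u ≤ 2r, ρ(U) = u - 1 if S_1 ⊆ U or S_2 ⊆ U, and ρ(U) = u otherwise; (iii) for r+1 ≤ u ≤ 2r, the number of sets U of size u with ρ(U) = u - 1 equals 2·C(n-r-1, u-r-1), and the number of sets U of size u with ρ(U) = u equals C(n,u) - 2·C(n-r-1, u-r-1), where C(a,b) denotes the binomial coefficient. -/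

import Mathlib

open Finset

/-- Coordinate index set of a `(k,r,h)` data-local code with `ℓ` local groups (see stmt 3). -/
abbrev DLIdx (ℓ r h : ℕ) : Type := (Fin ℓ × Fin r) ⊕ (Fin ℓ ⊕ Fin h)

/-- The support `S_i` of the `i`-th local group. -/
def dlGroup (ℓ r h : ℕ) (i : Fin ℓ) : Finset (DLIdx ℓ r h) :=
  insert (Sum.inr (Sum.inl i))
    ((Finset.univ : Finset (Fin r)).image fun j => Sum.inl (i, j))

/-- `ρ(U)`: the dimension of the projection of the code `C` onto the coordinates in `U`. -/
noncomputable def dlRho (ℓ r h : ℕ) (F : Type) [Field F]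
    (C : Submodule F (DLIdx ℓ r h → F)) (U : Finset (DLIdx ℓ r h)) : ℕ :=
  Module.finrank F (C.map (LinearMap.funLeft F F (Subtype.val : ↥U → DLIdx ℓ r h)))

section aux
variable {r h : ℕ} {F : Type} [Field F] {C : Submodule F (DLIdx 2 r h → F)}


lemma mem_dlGroup {i : Fin 2} {x : DLIdx 2 r h} :
    x ∈ dlGroup 2 r h i ↔ x = Sum.inr (Sum.inl i) ∨ ∃ j, x = Sum.inl (i, j) := by
  simp [dlGroup, eq_comm]

lemma card_dlGroup (i : Fin 2) : (dlGroup 2 r h i).card = r + 1 := by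
  rw [dlGroup, card_insert_of_notMem (by simp), Finset.card_image_of_injective _ (by
    intro a b hab; simpa using hab)]
  simp

variable (hsys : ∀ x : Fin 2 × Fin r → F, ∃! c : DLIdx 2 r h → F,
      c ∈ C ∧ ∀ p, c (Sum.inl p) = x p)

include hsys in
lemma code_zero {c : DLIdx 2 r h → F} (hc : c ∈ C) (h0 : ∀ p, c (Sum.inl p) = 0) : c = 0 := by
  obtain ⟨c₀, -, hu⟩ := hsys 0
  rw [hu c ⟨hc, fun p => h0 p⟩, hu 0 ⟨C.zero_mem, fun p => rfl⟩]

include hsys in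
lemma finrank_code : Module.finrank F C = 2 * r := by
  have hbij : Function.Bijective ((LinearMap.funLeft F F (Sum.inl : Fin 2 × Fin r → DLIdx 2 r h)).domRestrict C) := by
    constructor
    · rw [injective_iff_map_eq_zero]
      intro c hc0
      have : ∀ p, (c : DLIdx 2 r h → F) (Sum.inl p) = 0 := fun p => congrFun hc0 p
      exact Subtype.ext (code_zero hsys c.2 this)
    · intro x
      obtain ⟨c, ⟨hc, hx⟩, -⟩ := hsys x
      exact ⟨⟨c, hc⟩, funext hx⟩
  rw [(LinearEquiv.ofBijective _ hbij).finrank_eq, Module.finrank_fintype_fun_eq_card]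
  simp [Fintype.card_prod]

variable (a : Fin 2 → Fin r → F) (ha : ∀ i j, a i j ≠ 0)
  (hloc : ∀ c ∈ C, ∀ i : Fin 2,
      c (Sum.inr (Sum.inl i)) = ∑ j : Fin r, a i j * c (Sum.inl (i, j)))

include hsys ha hloc in
lemma code_vanish {E : Finset (DLIdx 2 r h)} (hE : ∀ i : Fin 2, (E ∩ dlGroup 2 r h i).card = r)
    {c : DLIdx 2 r h → F} (hc : c ∈ C) (h0 : ∀ x ∈ E, c x = 0) : c = 0 := by
  apply code_zero hsys hc
  rintro ⟨i, j⟩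
  by_cases hx : (Sum.inl (i, j) : DLIdx 2 r h) ∈ E
  · exact h0 _ hx
  · -- E ∩ S_i = S_i.erase (inl (i,j))
    have hmem : (Sum.inl (i, j) : DLIdx 2 r h) ∈ dlGroup 2 r h i := by simp [mem_dlGroup]
    have hsub : E ∩ dlGroup 2 r h i ⊆ (dlGroup 2 r h i).erase (Sum.inl (i, j)) := by
      intro y hy
      rw [Finset.mem_inter] at hy
      exact Finset.mem_erase.mpr ⟨fun hyx => hx (hyx ▸ hy.1), hy.2⟩
    have hcard : ((dlGroup 2 r h i).erase (Sum.inl (i, j))).card = r := by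
      rw [Finset.card_erase_of_mem hmem, card_dlGroup]; omega
    have heq : E ∩ dlGroup 2 r h i = (dlGroup 2 r h i).erase (Sum.inl (i, j)) :=
      Finset.eq_of_subset_of_card_le hsub (by rw [hcard, hE i])
    have hin : ∀ y ∈ dlGroup 2 r h i, y ≠ (Sum.inl (i, j) : DLIdx 2 r h) → c y = 0 := by
      intro y hy hyne
      have : y ∈ E ∩ dlGroup 2 r h i := heq ▸ Finset.mem_erase.mpr ⟨hyne, hy⟩
      exact h0 y (Finset.mem_inter.mp this).1
    have hpar : c (Sum.inr (Sum.inl i)) = 0 := hin _ (by simp [mem_dlGroup]) (by simp)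
    have hsum := hloc c hc i
    rw [hpar] at hsum
    rw [Finset.sum_eq_single j (fun j' _ hne => by
      rw [hin (Sum.inl (i, j')) (by simp [mem_dlGroup]) (by simp [hne]), mul_zero])
      (by simp)] at hsum
    rcases mul_eq_zero.mp hsum.symm with h' | h'
    · exact absurd h' (ha i j)
    · exact h'


lemma disjoint_dlGroup {i i' : Fin 2} (hne : i ≠ i') :
    Disjoint (dlGroup 2 r h i) (dlGroup 2 r h i') := by
  rw [Finset.disjoint_left]
  intro x hx hx'
  rw [mem_dlGroup] at hx hx'
  rcases hx with hx | ⟨j, hx⟩ <;> rcases hx' with hx' | ⟨j', hx'⟩ <;>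
    subst hx <;> simp_all


lemma map_proj_subset {U T : Finset (DLIdx 2 r h)} (hUT : U ⊆ T) :
    C.map (LinearMap.funLeft F F (Subtype.val : ↥U → DLIdx 2 r h)) =
      (C.map (LinearMap.funLeft F F (Subtype.val : ↥T → DLIdx 2 r h))).map
        (LinearMap.funLeft F F (fun x : ↥U => (⟨x.1, hUT x.2⟩ : ↥T))) := by
  rw [show LinearMap.funLeft F F (Subtype.val : ↥U → DLIdx 2 r h) =
      (LinearMap.funLeft F F (fun x : ↥U => (⟨x.1, hUT x.2⟩ : ↥T))).comp
        (LinearMap.funLeft F F (Subtype.val : ↥T → DLIdx 2 r h)) from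
      LinearMap.funLeft_comp F F _ _, Submodule.map_comp]

lemma dlRho_mono {U T : Finset (DLIdx 2 r h)} (hUT : U ⊆ T) :
    dlRho 2 r h F C U ≤ dlRho 2 r h F C T := by
  rw [dlRho, dlRho, map_proj_subset (C := C) hUT]
  exact Submodule.finrank_map_le _ _



variable [DecidableEq F] (hmrc : ∀ E : Finset (DLIdx 2 r h), E.card = 2 * r + h →
      (∀ i : Fin 2, (E ∩ dlGroup 2 r h i).card = r) →
      Module.finrank F
          (C.map (LinearMap.funLeft F F (Subtype.val : ↥E → DLIdx 2 r h))) = 2 * r ∧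
      ∀ y ∈ C.map (LinearMap.funLeft F F (Subtype.val : ↥E → DLIdx 2 r h)),
        y ≠ 0 → h + 1 ≤ hammingNorm y)

include hsys a ha hloc hmrc in
lemma proj_full {U : Finset (DLIdx 2 r h)} (hU2 : U.card ≤ 2 * r)
    (hU : ∀ i, ¬ dlGroup 2 r h i ⊆ U) :
    C.map (LinearMap.funLeft F F (Subtype.val : ↥U → DLIdx 2 r h)) = ⊤ := by
  classical
  -- intersections are small
  have hUSi : ∀ i, (U ∩ dlGroup 2 r h i).card ≤ r := by
    intro i
    by_contra hlt
    push_neg at hlt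
    have heq : U ∩ dlGroup 2 r h i = dlGroup 2 r h i :=
      Finset.eq_of_subset_of_card_le Finset.inter_subset_right (by rw [card_dlGroup]; omega)
    exact hU i (fun x hx => (Finset.mem_inter.mp (heq ▸ hx)).1)
  -- build E
  obtain ⟨A0, hA0s, hA0t, hA0c⟩ := Finset.exists_subsuperset_card_eq
    (Finset.inter_subset_right (s₁ := U)) (hUSi 0) (by rw [card_dlGroup]; omega)
  obtain ⟨A1, hA1s, hA1t, hA1c⟩ := Finset.exists_subsuperset_card_eq
    (Finset.inter_subset_right (s₁ := U)) (hUSi 1) (by rw [card_dlGroup]; omega)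
  set G : Finset (DLIdx 2 r h) :=
    (Finset.univ : Finset (Fin h)).image fun g => Sum.inr (Sum.inr g) with hG
  have hGcard : G.card = h := by
    rw [hG, Finset.card_image_of_injective _ (fun x y hxy => by simpa using hxy)]
    simp
  have hGmem : ∀ x ∈ G, ∃ g, x = Sum.inr (Sum.inr g) := by
    intro x hx
    simp only [hG, Finset.mem_image] at hx
    obtain ⟨g, -, rfl⟩ := hx
    exact ⟨g, rfl⟩
  set E : Finset (DLIdx 2 r h) := A0 ∪ A1 ∪ G with hE
  have hd01 : Disjoint A0 A1 := (disjoint_dlGroup (by decide)).mono hA0t hA1t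
  have hdG : Disjoint (A0 ∪ A1) G := by
    rw [Finset.disjoint_left]
    intro x hx hxG
    obtain ⟨g, rfl⟩ := hGmem x hxG
    rcases Finset.mem_union.mp hx with hx' | hx'
    · rcases mem_dlGroup.mp (hA0t hx') with h' | ⟨j, h'⟩ <;> simp at h'
    · rcases mem_dlGroup.mp (hA1t hx') with h' | ⟨j, h'⟩ <;> simp at h'
  have hEcard : E.card = 2 * r + h := by
    rw [hE, Finset.card_union_of_disjoint hdG, Finset.card_union_of_disjoint hd01,
      hA0c, hA1c, hGcard]
    ring
  have key : ∀ (i i' : Fin 2) (B B' : Finset (DLIdx 2 r h)), i ≠ i' →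
      B ⊆ dlGroup 2 r h i → B' ⊆ dlGroup 2 r h i' → (B ∪ B' ∪ G) ∩ dlGroup 2 r h i = B := by
    intro i i' B B' hne hB hB'
    apply Finset.Subset.antisymm
    · intro x hx
      obtain ⟨hxE, hxS⟩ := Finset.mem_inter.mp hx
      rcases Finset.mem_union.mp hxE with hx' | hxG
      · rcases Finset.mem_union.mp hx' with hxB | hxB'
        · exact hxB
        · exact absurd (hB' hxB') (Finset.disjoint_left.mp (disjoint_dlGroup hne) hxS)
      · obtain ⟨g, rfl⟩ := hGmem x hxG
        rcases mem_dlGroup.mp hxS with h' | ⟨j, h'⟩ <;> simp at h'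
    · intro x hx
      exact Finset.mem_inter.mpr ⟨Finset.mem_union_left _ (Finset.mem_union_left _ hx), hB hx⟩
  have hEi0 : (E ∩ dlGroup 2 r h 0).card = r := by
    rw [hE, key 0 1 A0 A1 (by decide) hA0t hA1t, hA0c]
  have hEi1 : (E ∩ dlGroup 2 r h 1).card = r := by
    rw [hE, show A0 ∪ A1 ∪ G = A1 ∪ A0 ∪ G from by rw [Finset.union_comm A0 A1],
      key 1 0 A1 A0 (by decide) hA1t hA0t, hA1c]
  have hEi : ∀ i : Fin 2, (E ∩ dlGroup 2 r h i).card = r := by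
    intro i
    fin_cases i
    · exact hEi0
    · exact hEi1
  have hUE : U ⊆ E := by
    intro x hx
    rcases x with ⟨i, j⟩ | (i | g)
    · have hxi : Sum.inl (i, j) ∈ U ∩ dlGroup 2 r h i :=
        Finset.mem_inter.mpr ⟨hx, by simp [mem_dlGroup]⟩
      fin_cases i
      · exact Finset.mem_union_left _ (Finset.mem_union_left _ (hA0s hxi))
      · exact Finset.mem_union_left _ (Finset.mem_union_right _ (hA1s hxi))
    · have hxi : Sum.inr (Sum.inl i) ∈ U ∩ dlGroup 2 r h i :=
        Finset.mem_inter.mpr ⟨hx, by simp [mem_dlGroup]⟩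
      fin_cases i
      · exact Finset.mem_union_left _ (Finset.mem_union_left _ (hA0s hxi))
      · exact Finset.mem_union_left _ (Finset.mem_union_right _ (hA1s hxi))
    · exact Finset.mem_union_right _ (by simp [hG])
  -- extend U to T of size 2r inside E
  obtain ⟨T, hUT, hTE, hTc⟩ := Finset.exists_subsuperset_card_eq hUE hU2 (by omega)
  -- injectivity of the projection to T restricted to C
  set fT := (LinearMap.funLeft F F (Subtype.val : ↥T → DLIdx 2 r h)).domRestrict C with hfT
  have hinj : Function.Injective fT := by
    rw [injective_iff_map_eq_zero]
    intro c hc0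
    have hvT : ∀ x ∈ T, (c : DLIdx 2 r h → F) x = 0 := fun x hx => congrFun hc0 ⟨x, hx⟩
    set y := LinearMap.funLeft F F (Subtype.val : ↥E → DLIdx 2 r h) (c : DLIdx 2 r h → F) with hy
    have hymem : y ∈ C.map (LinearMap.funLeft F F (Subtype.val : ↥E → DLIdx 2 r h)) :=
      ⟨(c : DLIdx 2 r h → F), c.2, rfl⟩
    have hyn : hammingNorm y ≤ h := by
      have hle : (Finset.univ.filter fun e : ↥E => y e ≠ 0).card ≤ (E \ T).card := by
        apply Finset.card_le_card_of_injOn Subtype.val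
        · intro e he
          rw [Finset.mem_coe, Finset.mem_filter] at he
          refine Finset.mem_sdiff.mpr ⟨e.2, fun hT => he.2 ?_⟩
          exact hvT e.1 hT
        · exact fun x _ y _ hxy => Subtype.ext hxy
      have : (E \ T).card = h := by
        rw [Finset.card_sdiff_of_subset hTE, hEcard, hTc]
        omega
      calc hammingNorm y ≤ (E \ T).card := hle
        _ = h := this
    have hy0 : y = 0 := by
      by_contra hne
      have := (hmrc E hEcard hEi).2 y hymem hne
      omega
    have hvE : ∀ x ∈ E, (c : DLIdx 2 r h → F) x = 0 := fun x hx => congrFun hy0 ⟨x, hx⟩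
    exact Subtype.ext (code_vanish hsys a ha hloc hEi c.2 hvE)
  have hTfull : C.map (LinearMap.funLeft F F (Subtype.val : ↥T → DLIdx 2 r h)) = ⊤ := by
    apply Submodule.eq_top_of_finrank_eq
    rw [← LinearMap.range_domRestrict, ← hfT, LinearMap.finrank_range_of_inj hinj,
      finrank_code hsys, Module.finrank_fintype_fun_eq_card, Fintype.card_coe, hTc]
  rw [map_proj_subset (C := C) hUT, hTfull, Submodule.map_top, LinearMap.range_eq_top]
  refine LinearMap.funLeft_surjective_of_injective F F _ ?_
  intro x y hxy
  have hval : (x : DLIdx 2 r h) = (y : DLIdx 2 r h) := congrArg (Subtype.val : ↥T → DLIdx 2 r h) hxy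
  exact Subtype.ext hval



include a ha hloc in
lemma rho_le_of_group_subset {U : Finset (DLIdx 2 r h)} {i : Fin 2}
    (hSU : dlGroup 2 r h i ⊆ U) : dlRho 2 r h F C U ≤ U.card - 1 := by
  classical
  have hpU : (Sum.inr (Sum.inl i) : DLIdx 2 r h) ∈ U := hSU (by simp [mem_dlGroup])
  have hmU : ∀ j : Fin r, (Sum.inl (i, j) : DLIdx 2 r h) ∈ U :=
    fun j => hSU (by simp [mem_dlGroup])
  set φ : (↥U → F) →ₗ[F] F :=
    LinearMap.proj (⟨Sum.inr (Sum.inl i), hpU⟩ : ↥U)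
      - ∑ j : Fin r, a i j • LinearMap.proj (⟨Sum.inl (i, j), hmU j⟩ : ↥U) with hφ
  have hφapply : ∀ y : ↥U → F, φ y = y ⟨Sum.inr (Sum.inl i), hpU⟩
      - ∑ j : Fin r, a i j * y ⟨Sum.inl (i, j), hmU j⟩ := by
    intro y
    simp [hφ, smul_eq_mul]
  have himg : C.map (LinearMap.funLeft F F (Subtype.val : ↥U → DLIdx 2 r h))
      ≤ LinearMap.ker φ := by
    rintro y ⟨c, hc, rfl⟩
    rw [LinearMap.mem_ker, hφapply]
    simp only [LinearMap.funLeft_apply]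
    rw [hloc c hc i]
    simp
  have h1 : φ (Pi.single (⟨Sum.inr (Sum.inl i), hpU⟩ : ↥U) 1) = 1 := by
    rw [hφapply, Pi.single_eq_same,
      Finset.sum_eq_zero (fun j _ => by
        rw [Pi.single_eq_of_ne (by simp [Subtype.ext_iff]) 1, mul_zero])]
    ring
  have hrange : LinearMap.range φ = ⊤ := by
    rw [LinearMap.range_eq_top]
    intro c
    refine ⟨c • (Pi.single (⟨Sum.inr (Sum.inl i), hpU⟩ : ↥U) (1 : F) : ↥U → F), ?_⟩
    rw [map_smul, h1, smul_eq_mul, mul_one]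
  have hker : Module.finrank F (LinearMap.ker φ) = U.card - 1 := by
    have hrn := LinearMap.finrank_range_add_finrank_ker φ
    rw [hrange, finrank_top, Module.finrank_fintype_fun_eq_card, Fintype.card_coe,
      Module.finrank_self] at hrn
    omega
  exact le_trans (Submodule.finrank_mono himg) hker.le

include hsys a ha hloc hmrc in
lemma rho_eq_of_no_group {U : Finset (DLIdx 2 r h)} (hU2 : U.card ≤ 2 * r)
    (hU : ∀ i, ¬ dlGroup 2 r h i ⊆ U) : dlRho 2 r h F C U = U.card := by
  rw [dlRho, proj_full hsys a ha hloc hmrc hU2 hU, finrank_top,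
    Module.finrank_fintype_fun_eq_card, Fintype.card_coe]

include hsys a ha hloc hmrc in
lemma rho_eq_of_group {U : Finset (DLIdx 2 r h)} (hU2 : U.card ≤ 2 * r) {i : Fin 2}
    (hSU : dlGroup 2 r h i ⊆ U) : dlRho 2 r h F C U = U.card - 1 := by
  classical
  have hub := rho_le_of_group_subset a ha hloc hSU (C := C)
  have hpU : (Sum.inr (Sum.inl i) : DLIdx 2 r h) ∈ U := hSU (by simp [mem_dlGroup])
  set U' := U.erase (Sum.inr (Sum.inl i)) with hU'
  have hU'c : U'.card = U.card - 1 := Finset.card_erase_of_mem hpU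
  have hUcpos : 1 ≤ U.card := Finset.card_pos.mpr ⟨_, hpU⟩
  have hnog : ∀ i', ¬ dlGroup 2 r h i' ⊆ U' := by
    intro i' hsub
    by_cases hii : i' = i
    · subst hii
      exact Finset.notMem_erase _ U (hsub (by simp [mem_dlGroup]))
    · have hsubU : dlGroup 2 r h i' ⊆ U := hsub.trans (Finset.erase_subset _ _)
      have hcard := Finset.card_le_card (Finset.union_subset hSU hsubU)
      rw [Finset.card_union_of_disjoint (disjoint_dlGroup (fun hh => hii hh.symm)),
        card_dlGroup, card_dlGroup] at hcard
      omega
  have hlb : dlRho 2 r h F C U' = U.card - 1 := by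
    rw [rho_eq_of_no_group hsys a ha hloc hmrc (by omega) hnog, hU'c]
  have hmono := dlRho_mono (C := C) (Finset.erase_subset (Sum.inr (Sum.inl i)) U)
  rw [hlb] at hmono
  omega



lemma count_card_superset {α : Type*} [Fintype α] [DecidableEq α] (S : Finset α) {u : ℕ}
    (hu : S.card ≤ u) :
    (Finset.univ.filter fun U : Finset α => U.card = u ∧ S ⊆ U).card
      = (Fintype.card α - S.card).choose (u - S.card) := by
  have hbij : (Finset.univ.filter fun U : Finset α => U.card = u ∧ S ⊆ U).card
      = (Finset.powersetCard (u - S.card) (Finset.univ \ S)).card := by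
    apply Finset.card_nbij' (i := fun U => U \ S) (j := fun V => V ∪ S)
    · intro U hU
      rw [Finset.mem_coe, Finset.mem_filter] at hU
      obtain ⟨-, hUc, hSU⟩ := hU
      rw [Finset.mem_coe, Finset.mem_powersetCard]
      exact ⟨fun x hx => Finset.mem_sdiff.mpr ⟨Finset.mem_univ x, (Finset.mem_sdiff.mp hx).2⟩,
        by rw [Finset.card_sdiff_of_subset hSU, hUc]⟩
    · intro V hV
      rw [Finset.mem_coe, Finset.mem_powersetCard] at hV
      obtain ⟨hVsub, hVc⟩ := hV
      have hdisj : Disjoint V S :=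
        Finset.disjoint_left.mpr fun x hx => (Finset.mem_sdiff.mp (hVsub hx)).2
      rw [Finset.mem_coe, Finset.mem_filter]
      refine ⟨Finset.mem_univ _, ?_, Finset.subset_union_right⟩
      rw [Finset.card_union_of_disjoint hdisj, hVc]
      omega
    · intro U hU
      rw [Finset.mem_coe, Finset.mem_filter] at hU
      exact Finset.sdiff_union_of_subset hU.2.2
    · intro V hV
      rw [Finset.mem_coe, Finset.mem_powersetCard] at hV
      exact Finset.union_sdiff_cancel_right
        (Finset.disjoint_left.mpr fun x hx => (Finset.mem_sdiff.mp (hV.1 hx)).2)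
  rw [hbij, Finset.card_powersetCard, Finset.card_sdiff_of_subset (Finset.subset_univ S), Finset.card_univ]

end aux

/-- rank structure of a `(k,r,h)` data-local MRC with two local groups
(`k = 2r`, `n = 2r + 2 + h`):
(i) every `U` with `|U| ≤ r` has `ρ(U) = |U|`;
(ii) for `r+1 ≤ |U| ≤ 2r`, `ρ(U) = |U| - 1` if `S₁ ⊆ U` or `S₂ ⊆ U`, else `ρ(U) = |U|`;
(iii) for `r+1 ≤ u ≤ 2r`, `#{U : |U| = u, ρ(U) = u-1} = 2·C(n-r-1, u-r-1)` and
`#{U : |U| = u, ρ(U) = u} = C(n,u) - 2·C(n-r-1, u-r-1)`. -/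
theorem stmt_5 (r h n : ℕ) (hr : 0 < r) (hn : n = 2 * r + 2 + h)
    (F : Type) [Field F] [Fintype F] [DecidableEq F]
    (C : Submodule F (DLIdx 2 r h → F))
    (hsys : ∀ x : Fin 2 × Fin r → F, ∃! c : DLIdx 2 r h → F,
      c ∈ C ∧ ∀ p, c (Sum.inl p) = x p)
    (a : Fin 2 → Fin r → F) (ha : ∀ i j, a i j ≠ 0)
    (hloc : ∀ c ∈ C, ∀ i : Fin 2,
      c (Sum.inr (Sum.inl i)) = ∑ j : Fin r, a i j * c (Sum.inl (i, j)))
    (hmrc : ∀ E : Finset (DLIdx 2 r h), E.card = 2 * r + h →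
      (∀ i : Fin 2, (E ∩ dlGroup 2 r h i).card = r) →
      Module.finrank F
          (C.map (LinearMap.funLeft F F (Subtype.val : ↥E → DLIdx 2 r h))) = 2 * r ∧
      ∀ y ∈ C.map (LinearMap.funLeft F F (Subtype.val : ↥E → DLIdx 2 r h)),
        y ≠ 0 → h + 1 ≤ hammingNorm y) :
    -- (i)
    (∀ U : Finset (DLIdx 2 r h), U.card ≤ r → dlRho 2 r h F C U = U.card) ∧
    -- (ii)
    (∀ U : Finset (DLIdx 2 r h), r + 1 ≤ U.card → U.card ≤ 2 * r →
      ((dlGroup 2 r h 0 ⊆ U ∨ dlGroup 2 r h 1 ⊆ U) → dlRho 2 r h F C U = U.card - 1) ∧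
      (¬(dlGroup 2 r h 0 ⊆ U ∨ dlGroup 2 r h 1 ⊆ U) → dlRho 2 r h F C U = U.card)) ∧
    -- (iii)
    (∀ u : ℕ, r + 1 ≤ u → u ≤ 2 * r →
      Nat.card {U : Finset (DLIdx 2 r h) // U.card = u ∧ dlRho 2 r h F C U = u - 1} =
        2 * Nat.choose (n - r - 1) (u - r - 1) ∧
      Nat.card {U : Finset (DLIdx 2 r h) // U.card = u ∧ dlRho 2 r h F C U = u} =
        Nat.choose n u - 2 * Nat.choose (n - r - 1) (u - r - 1)) := by
  classical
  have hcardI : Fintype.card (DLIdx 2 r h) = 2 * r + 2 + h := by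
    simp [Fintype.card_sum, Fintype.card_prod]
    omega
  have part1 : ∀ U : Finset (DLIdx 2 r h), U.card ≤ r → dlRho 2 r h F C U = U.card := by
    intro U hUr
    have hno : ∀ i, ¬ dlGroup 2 r h i ⊆ U := by
      intro i hsub
      have := Finset.card_le_card hsub
      rw [card_dlGroup] at this
      omega
    exact rho_eq_of_no_group hsys a ha hloc hmrc (by omega) hno
  have part2 : ∀ U : Finset (DLIdx 2 r h), r + 1 ≤ U.card → U.card ≤ 2 * r →
      ((dlGroup 2 r h 0 ⊆ U ∨ dlGroup 2 r h 1 ⊆ U) → dlRho 2 r h F C U = U.card - 1) ∧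
      (¬(dlGroup 2 r h 0 ⊆ U ∨ dlGroup 2 r h 1 ⊆ U) → dlRho 2 r h F C U = U.card) := by
    intro U h1 h2
    constructor
    · rintro (hs | hs)
      · exact rho_eq_of_group hsys a ha hloc hmrc h2 hs
      · exact rho_eq_of_group hsys a ha hloc hmrc h2 hs
    · intro hns
      push_neg at hns
      refine rho_eq_of_no_group hsys a ha hloc hmrc h2 ?_
      intro i
      fin_cases i
      · exact hns.1
      · exact hns.2
  refine ⟨part1, part2, ?_⟩
  intro u hu1 hu2
  have hiff1 : ∀ U : Finset (DLIdx 2 r h),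
      (U.card = u ∧ dlRho 2 r h F C U = u - 1) ↔
      (U.card = u ∧ (dlGroup 2 r h 0 ⊆ U ∨ dlGroup 2 r h 1 ⊆ U)) := by
    intro U
    constructor
    · rintro ⟨hc, hrho⟩
      refine ⟨hc, ?_⟩
      by_contra hP
      have := (part2 U (hc ▸ hu1) (hc ▸ hu2)).2 hP
      rw [hc] at this
      omega
    · rintro ⟨hc, hP⟩
      refine ⟨hc, ?_⟩
      rw [(part2 U (hc ▸ hu1) (hc ▸ hu2)).1 hP, hc]
  have hiff2 : ∀ U : Finset (DLIdx 2 r h),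
      (U.card = u ∧ dlRho 2 r h F C U = u) ↔
      (U.card = u ∧ ¬(dlGroup 2 r h 0 ⊆ U ∨ dlGroup 2 r h 1 ⊆ U)) := by
    intro U
    constructor
    · rintro ⟨hc, hrho⟩
      refine ⟨hc, ?_⟩
      intro hP
      have := (part2 U (hc ▸ hu1) (hc ▸ hu2)).1 hP
      rw [hc] at this
      omega
    · rintro ⟨hc, hP⟩
      refine ⟨hc, ?_⟩
      rw [(part2 U (hc ▸ hu1) (hc ▸ hu2)).2 hP, hc]
  have hcount_i : ∀ i : Fin 2,
      (Finset.univ.filter fun U : Finset (DLIdx 2 r h) =>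
        U.card = u ∧ dlGroup 2 r h i ⊆ U).card = (n - r - 1).choose (u - r - 1) := by
    intro i
    rw [count_card_superset _ (by rw [card_dlGroup]; omega), card_dlGroup, hcardI]
    congr 1 <;> omega
  have hdisj : Disjoint
      (Finset.univ.filter fun U : Finset (DLIdx 2 r h) => U.card = u ∧ dlGroup 2 r h 0 ⊆ U)
      (Finset.univ.filter fun U : Finset (DLIdx 2 r h) => U.card = u ∧ dlGroup 2 r h 1 ⊆ U) := by
    rw [Finset.disjoint_left]
    rintro U hU0 hU1
    rw [Finset.mem_filter] at hU0 hU1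
    obtain ⟨-, hc, h0⟩ := hU0
    obtain ⟨-, -, h1'⟩ := hU1
    have hle := Finset.card_le_card (Finset.union_subset h0 h1')
    rw [Finset.card_union_of_disjoint (disjoint_dlGroup (by decide)), card_dlGroup,
      card_dlGroup, hc] at hle
    omega
  have hsplit : (Finset.univ.filter fun U : Finset (DLIdx 2 r h) =>
        U.card = u ∧ (dlGroup 2 r h 0 ⊆ U ∨ dlGroup 2 r h 1 ⊆ U))
      = (Finset.univ.filter fun U : Finset (DLIdx 2 r h) => U.card = u ∧ dlGroup 2 r h 0 ⊆ U)
        ∪ (Finset.univ.filter fun U : Finset (DLIdx 2 r h) =>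
            U.card = u ∧ dlGroup 2 r h 1 ⊆ U) := by
    ext U
    simp only [Finset.mem_filter, Finset.mem_union, Finset.mem_univ, true_and]
    tauto
  have hA : (Finset.univ.filter fun U : Finset (DLIdx 2 r h) =>
        U.card = u ∧ (dlGroup 2 r h 0 ⊆ U ∨ dlGroup 2 r h 1 ⊆ U)).card
      = 2 * (n - r - 1).choose (u - r - 1) := by
    rw [hsplit, Finset.card_union_of_disjoint hdisj, hcount_i 0, hcount_i 1]
    ring
  have e1 : Nat.card {U : Finset (DLIdx 2 r h) // U.card = u ∧ dlRho 2 r h F C U = u - 1}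
      = (Finset.univ.filter fun U : Finset (DLIdx 2 r h) =>
          U.card = u ∧ (dlGroup 2 r h 0 ⊆ U ∨ dlGroup 2 r h 1 ⊆ U)).card := by
    rw [Nat.card_congr (Equiv.subtypeEquivRight hiff1), Nat.card_eq_fintype_card,
      Fintype.card_subtype]
  have e2 : Nat.card {U : Finset (DLIdx 2 r h) // U.card = u ∧ dlRho 2 r h F C U = u}
      = (Finset.univ.filter fun U : Finset (DLIdx 2 r h) =>
          U.card = u ∧ ¬(dlGroup 2 r h 0 ⊆ U ∨ dlGroup 2 r h 1 ⊆ U)).card := by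
    rw [Nat.card_congr (Equiv.subtypeEquivRight hiff2), Nat.card_eq_fintype_card,
      Fintype.card_subtype]
  have htot : (Finset.univ.filter fun U : Finset (DLIdx 2 r h) => U.card = u).card
      = n.choose u := by
    rw [show (Finset.univ : Finset (Finset (DLIdx 2 r h))) = Finset.univ.powerset from
      Finset.powerset_univ.symm, ← Finset.powersetCard_eq_filter, Finset.card_powersetCard,
      Finset.card_univ, hcardI, ← hn]
  have hsum := Finset.card_filter_add_card_filter_not
    (s := Finset.univ.filter fun U : Finset (DLIdx 2 r h) => U.card = u)
    (p := fun U => dlGroup 2 r h 0 ⊆ U ∨ dlGroup 2 r h 1 ⊆ U)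
  rw [Finset.filter_filter, Finset.filter_filter, htot] at hsum
  constructor
  · rw [e1, hA]
  · rw [e2]
    omega
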